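/- With M, g and τ_i as defined in the context, each τ_i is an idempotent transformation of M, τ_i ∘ τ_j = τ_j ∘ τ_i whenever i and j are not adjacent in Γ, and τ_i ∘ τ_j ∘ τ_i = τ_j ∘ τ_i ∘ τ_j = τ_i ∘ τ_j whenever Γ⃗ contains the arrow i → j. Consequently, the assignment ε_i ↦ τ_i extends uniquely to a monoid homomorphism from KH(Γ⃗) to the monoid of all total transformations of M under composition. -/

import Mathlib

open FreeMonoid SimpleGraph

/-- The defining relations of a Hecke-Kiselman monoid associated with the
mixed graph encoded by the binary relation `Θ`. -/
inductive HKRel {ι : Type*} (Θ : ι → ι → Prop) : FreeMonoid ι → FreeMonoid ι → Prop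
  | idem (i : ι) : HKRel Θ (of i * of i) (of i)
  | comm (i j : ι) (h₁ : ¬ Θ i j) (h₂ : ¬ Θ j i) :
      HKRel Θ (of i * of j) (of j * of i)
  | braid (i j : ι) (h₁ : Θ i j) (h₂ : Θ j i) :
      HKRel Θ (of i * of j * of i) (of j * of i * of j)
  | kisel (i j : ι) (h₁ : Θ i j) (h₂ : ¬ Θ j i) :
      HKRel Θ (of i * of j * of i) (of i * of j)
  | kisel' (i j : ι) (h₁ : Θ i j) (h₂ : ¬ Θ j i) :
      HKRel Θ (of j * of i * of j) (of i * of j)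

/-- The Hecke-Kiselman monoid of the mixed graph encoded by `Θ`. -/
abbrev HK {ι : Type*} (Θ : ι → ι → Prop) : Type _ := (conGen (HKRel Θ)).Quotient

/-- The canonical idempotent generators of a Hecke-Kiselman monoid. -/
def HK.gen {ι : Type*} (Θ : ι → ι → Prop) (i : ι) : HK Θ :=
  (conGen (HKRel Θ)).mk' (FreeMonoid.of i)

/-- Dynkin diagram of type `D n` (meaningful for `4 ≤ n`). -/
def typeD (n : ℕ) : SimpleGraph (Fin n) :=
  SimpleGraph.fromRel (fun i j =>
    ((i : ℕ) + 1 = (j : ℕ) ∧ 1 ≤ (i : ℕ)) ∨ ((i : ℕ) = 0 ∧ (j : ℕ) = 2))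

/-- Dynkin diagram of type `E n` (meaningful for `n = 6, 7, 8`). -/
def typeE (n : ℕ) : SimpleGraph (Fin n) :=
  SimpleGraph.fromRel (fun i j =>
    ((i : ℕ) + 1 = (j : ℕ) ∧ 1 ≤ (i : ℕ)) ∨ ((i : ℕ) = 0 ∧ (j : ℕ) = 3))

/-- A graph is of type `A`, `D` or `E` if it is isomorphic to one of the
simply laced Dynkin diagrams `A n` (`n ≥ 1`), `D n` (`n ≥ 4`), `E6`, `E7`, `E8`. -/
def IsADE {V : Type*} (G : SimpleGraph V) : Prop :=
  (∃ n, 1 ≤ n ∧ Nonempty (G ≃g pathGraph n)) ∨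
  (∃ n, 4 ≤ n ∧ Nonempty (G ≃g typeD n)) ∨
  (∃ n, (n = 6 ∨ n = 7 ∨ n = 8) ∧ Nonempty (G ≃g typeE n))

/-- A simply laced Dynkin diagram: a simple graph each of whose connected
components is of type `A`, `D` or `E`. -/
def IsSimplyLacedDynkin {V : Type*} (G : SimpleGraph V) : Prop :=
  ∀ c : G.ConnectedComponent, IsADE (G.induce c.supp)

/-- `Θ` is an orientation of the simple graph `G`: every edge of `G` is given
exactly one direction. -/
def IsOrientation {V : Type*} (G : SimpleGraph V) (Θ : V → V → Prop) : Prop :=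
  (∀ i j, G.Adj i j ↔ (Θ i j ∨ Θ j i)) ∧ (∀ i j, Θ i j → ¬ Θ j i)
variable {V : Type*}

/-- The set of arrows of the digraph `Θ`. -/
def Arrows (Θ : V → V → Prop) : Type _ := {p : V × V // Θ p.1 p.2}

/-- The set of sinks (vertices of outdegree zero) of the digraph `Θ`. -/
def Sinks (Θ : V → V → Prop) : Type _ := {v : V // ∀ w, ¬ Θ v w}

/-- The set of sinks of indegree two of the digraph `Θ`. -/
def Sinks₂ (Θ : V → V → Prop) : Type _ :=
  {v : V // (∀ w, ¬ Θ v w) ∧ Nat.card {u : V // Θ u v} = 2}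

/-- The set of sources (vertices of indegree zero) of the digraph `Θ`. -/
def Sources (Θ : V → V → Prop) : Type _ := {v : V // ∀ w, ¬ Θ w v}

/-- The set `M` on which the transformation representation acts: the disjoint
union of the arrows, the sinks, the sinks of indegree two and the sources. -/
def MSet (Θ : V → V → Prop) : Type _ :=
  Arrows Θ ⊕ Sinks Θ ⊕ Sinks₂ Θ ⊕ Sources Θ

/-- Let `Θ` be an orientation of a simply laced Dynkin diagram `G`
such that every triple point has indegree at most one, let
`g : Sinks ⊔ Sinks₂ → Arrows` be an injection sending each vertex to an arrow
terminating at it, and let `τ i : MSet Θ → MSet Θ` (for vertices `i`) be the family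
of transformations defined by the paper's formula (here specified by the case
equations `hτ₁`–`hτ₇`). Then every `τ i` is idempotent, `τ i` and `τ j` commute
when `i` and `j` are not adjacent, the Kiselman relations hold along each arrow
`i → j`, and consequently `ε i ↦ τ i` extends uniquely to a monoid homomorphism
from the Kiselman quotient of the 0-Hecke monoid to the monoid of total
transformations of `MSet Θ` under composition. -/
theorem kiselmanQuotient_transformation_representation
    [Fintype V] (G : SimpleGraph V) (hG : IsSimplyLacedDynkin G)
    (Θ : V → V → Prop) (hΘ : IsOrientation G Θ)
    (hdeg : ∀ v : V, Nat.card {w : V // G.Adj v w} = 3 → Nat.card {w : V // Θ w v} ≤ 1)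
    (g : Sinks Θ ⊕ Sinks₂ Θ → Arrows Θ)
    (hg_inj : Function.Injective g)
    (hg_target : ∀ x, (g x).1.2 = Sum.elim (fun s => s.1) (fun s => s.1) x)
    (τ : V → MSet Θ → MSet Θ)
    -- `x` is an arrow with source `i` and `b` is an arrow with target `i`:
    (hτ₁ : ∀ (i : V) (a b : Arrows Θ), a.1.1 = i → b.1.2 = i →
      τ i (Sum.inl a) = Sum.inl b)
    -- `x` is an arrow with source `i` and `i` is a source:
    (hτ₂ : ∀ (i : V) (a : Arrows Θ) (s : Sources Θ), a.1.1 = i → s.1 = i →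
      τ i (Sum.inl a) = Sum.inr (Sum.inr (Sum.inr s)))
    -- `x` is the element of `Sinks` corresponding to the sink `i`:
    (hτ₃ : ∀ (i : V) (s : Sinks Θ), s.1 = i →
      τ i (Sum.inr (Sum.inl s)) = Sum.inl (g (Sum.inl s)))
    -- `x` is the element of `Sinks₂` corresponding to the sink `i`:
    (hτ₄ : ∀ (i : V) (s : Sinks₂ Θ), s.1 = i →
      τ i (Sum.inr (Sum.inr (Sum.inl s))) = Sum.inl (g (Sum.inr s)))
    -- all remaining elements are fixed:
    (hτ₅ : ∀ (i : V) (a : Arrows Θ), a.1.1 ≠ i → τ i (Sum.inl a) = Sum.inl a)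
    (hτ₆ : ∀ (i : V) (s : Sinks Θ), s.1 ≠ i →
      τ i (Sum.inr (Sum.inl s)) = Sum.inr (Sum.inl s))
    (hτ₇ : ∀ (i : V) (s : Sinks₂ Θ), s.1 ≠ i →
      τ i (Sum.inr (Sum.inr (Sum.inl s))) = Sum.inr (Sum.inr (Sum.inl s)))
    (hτ₈ : ∀ (i : V) (s : Sources Θ),
      τ i (Sum.inr (Sum.inr (Sum.inr s))) = Sum.inr (Sum.inr (Sum.inr s))) :
    (∀ i, τ i ∘ τ i = τ i) ∧
    (∀ i j, ¬ G.Adj i j → τ i ∘ τ j = τ j ∘ τ i) ∧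
    (∀ i j, Θ i j →
      τ i ∘ τ j ∘ τ i = τ j ∘ τ i ∘ τ j ∧ τ j ∘ τ i ∘ τ j = τ i ∘ τ j) ∧
    (∃! φ : HK Θ →* Function.End (MSet Θ), ∀ i, φ (HK.gen Θ i) = τ i) := by
  obtain ⟨hadj, hasym⟩ := hΘ
  have hirr : ∀ i, ¬ Θ i i := fun i h => hasym i i h h
  have hΘin : ∀ (b : Arrows Θ) (i : V), b.1.2 = i → Θ b.1.1 i := fun b i h => h ▸ b.2
  -- computation of τ i on arrows with source i
  have key : ∀ (i : V) (a : Arrows Θ), a.1.1 = i →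
      (∃ b : Arrows Θ, b.1.2 = i ∧ b.1.1 ≠ i ∧ τ i (Sum.inl a) = Sum.inl b) ∨
      (∃ s : Sources Θ, τ i (Sum.inl a) = Sum.inr (Sum.inr (Sum.inr s))) := by
    intro i a ha
    by_cases h : ∃ u, Θ u i
    · obtain ⟨u, hu⟩ := h
      refine Or.inl ⟨⟨(u, i), hu⟩, rfl, ?_, hτ₁ i a _ ha rfl⟩
      exact fun he => hirr i (he ▸ hu)
    · push_neg at h
      exact Or.inr ⟨⟨i, h⟩, hτ₂ i a ⟨i, h⟩ ha rfl⟩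
  -- the arrows chosen by g
  have hg₁ : ∀ s : Sinks Θ, Θ (g (Sum.inl s)).1.1 s.1 :=
    fun s => hΘin _ _ (hg_target (Sum.inl s))
  have hg₂ : ∀ s : Sinks₂ Θ, Θ (g (Sum.inr s)).1.1 s.1 :=
    fun s => hΘin _ _ (hg_target (Sum.inr s))
  have idem : ∀ i, τ i ∘ τ i = τ i := by
    intro i
    funext x
    show τ i (τ i x) = τ i x
    rcases x with a | s | s | s
    · by_cases ha : a.1.1 = i
      · rcases key i a ha with ⟨b, hb2, hb1, hb⟩ | ⟨s, hs⟩
        · rw [hb, hτ₅ i b hb1]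
        · rw [hs, hτ₈]
      · simp only [hτ₅ i a ha] <;> rfl
    · by_cases hs : s.1 = i
      · rw [hτ₃ i s hs]
        have hgs := hg₁ s
        rw [hs] at hgs
        exact hτ₅ i _ (fun h => hirr i (h ▸ hgs))
      · simp only [hτ₆ i s hs] <;> rfl
    · by_cases hs : s.1 = i
      · rw [hτ₄ i s hs]
        have hgs := hg₂ s
        rw [hs] at hgs
        exact hτ₅ i _ (fun h => hirr i (h ▸ hgs))
      · simp only [hτ₇ i s hs] <;> rfl
    · simp only [hτ₈ i s] <;> rfl
  have comm : ∀ i j, ¬ G.Adj i j → τ i ∘ τ j = τ j ∘ τ i := by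
    intro i j hnadj
    by_cases hij : i = j
    · rw [hij]
    have hΘ1 : ¬ Θ i j := fun h => hnadj ((hadj i j).2 (Or.inl h))
    have hΘ2 : ¬ Θ j i := fun h => hnadj ((hadj i j).2 (Or.inr h))
    funext x
    show τ i (τ j x) = τ j (τ i x)
    rcases x with a | s | s | s
    · by_cases hai : a.1.1 = i
      · have haj : a.1.1 ≠ j := fun h => hij (hai.symm.trans h)
        rcases key i a hai with ⟨b, hb2, hb1, hb⟩ | ⟨s, hs⟩
        · have hbj : b.1.1 ≠ j := fun h => hΘ2 (h ▸ hΘin b i hb2)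
          simp only [hτ₅ j a haj, hb, hτ₅ j b hbj] <;> rfl
        · simp only [hτ₅ j a haj, hs, hτ₈] <;> rfl
      · by_cases haj : a.1.1 = j
        · rcases key j a haj with ⟨b, hb2, hb1, hb⟩ | ⟨s, hs⟩
          · have hbi : b.1.1 ≠ i := fun h => hΘ1 (h ▸ hΘin b j hb2)
            simp only [hτ₅ i a hai, hb, hτ₅ i b hbi] <;> rfl
          · simp only [hτ₅ i a hai, hs, hτ₈] <;> rfl
        · simp only [hτ₅ i a hai, hτ₅ j a haj] <;> rfl
    · by_cases hsi : s.1 = i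
      · have hsj : s.1 ≠ j := fun h => hij (hsi.symm.trans h)
        have hgj : (g (Sum.inl s)).1.1 ≠ j := fun h => hΘ2 (hsi ▸ h ▸ hg₁ s)
        simp only [hτ₆ j s hsj, hτ₃ i s hsi, hτ₅ j _ hgj] <;> rfl
      · by_cases hsj : s.1 = j
        · have hgi : (g (Sum.inl s)).1.1 ≠ i := fun h => hΘ1 (hsj ▸ h ▸ hg₁ s)
          simp only [hτ₆ i s hsi, hτ₃ j s hsj, hτ₅ i _ hgi] <;> rfl
        · simp only [hτ₆ i s hsi, hτ₆ j s hsj] <;> rfl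
    · by_cases hsi : s.1 = i
      · have hsj : s.1 ≠ j := fun h => hij (hsi.symm.trans h)
        have hgj : (g (Sum.inr s)).1.1 ≠ j := fun h => hΘ2 (hsi ▸ h ▸ hg₂ s)
        simp only [hτ₇ j s hsj, hτ₄ i s hsi, hτ₅ j _ hgj] <;> rfl
      · by_cases hsj : s.1 = j
        · have hgi : (g (Sum.inr s)).1.1 ≠ i := fun h => hΘ1 (hsj ▸ h ▸ hg₂ s)
          simp only [hτ₇ i s hsi, hτ₄ j s hsj, hτ₅ i _ hgi] <;> rfl
        · simp only [hτ₇ i s hsi, hτ₇ j s hsj] <;> rfl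
    · simp only [hτ₈] <;> rfl
  have hC1 : ∀ i j, Θ i j → ∀ x, τ i (τ j (τ i x)) = τ i (τ j x) := by
    intro i j hij x
    have hji : ¬ Θ j i := hasym i j hij
    have hne : i ≠ j := fun h => hirr j (h ▸ hij)
    rcases x with a | s | s | s
    · by_cases hai : a.1.1 = i
      · have haj : a.1.1 ≠ j := fun h => hne (hai.symm.trans h)
        rcases key i a hai with ⟨b, hb2, hb1, hb⟩ | ⟨s, hs⟩
        · have hbj : b.1.1 ≠ j := fun h => hji (h ▸ hΘin b i hb2)
          simp only [hb, hτ₅ j b hbj, hτ₅ i b hb1, hτ₅ j a haj] <;> rfl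
        · simp only [hs, hτ₈, hτ₅ j a haj] <;> rfl
      · simp only [hτ₅ i a hai] <;> rfl
    · have hsi : s.1 ≠ i := fun h => s.2 j (h ▸ hij : Θ s.1 j)
      simp only [hτ₆ i s hsi] <;> rfl
    · have hsi : s.1 ≠ i := fun h => s.2.1 j (h ▸ hij : Θ s.1 j)
      simp only [hτ₇ i s hsi] <;> rfl
    · simp only [hτ₈] <;> rfl
  have hC2 : ∀ i j, Θ i j → ∀ x, τ j (τ i (τ j x)) = τ i (τ j x) := by
    intro i j hij x
    have hji : ¬ Θ j i := hasym i j hij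
    have hne : i ≠ j := fun h => hirr j (h ▸ hij)
    -- auxiliary : τ j fixes τ i (Sum.inl c) when c has source i
    have aux : ∀ c : Arrows Θ, c.1.1 = i → τ j (τ i (Sum.inl c)) = τ i (Sum.inl c) := by
      intro c hc
      rcases key i c hc with ⟨b, hb2, hb1, hb⟩ | ⟨s, hs⟩
      · have hbj : b.1.1 ≠ j := fun h => hji (h ▸ hΘin b i hb2)
        rw [hb, hτ₅ j b hbj]
      · rw [hs, hτ₈]
    rcases x with a | s | s | s
    · by_cases haj : a.1.1 = j
      · have he : τ j (Sum.inl a) = Sum.inl (⟨(i, j), hij⟩ : Arrows Θ) :=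
          hτ₁ j a _ haj rfl
        rw [he]
        exact aux _ rfl
      · rw [hτ₅ j a haj]
        by_cases hai : a.1.1 = i
        · exact aux a hai
        · rw [hτ₅ i a hai, hτ₅ j a haj]
    · by_cases hsj : s.1 = j
      · rw [hτ₃ j s hsj]
        set c := g (Sum.inl s) with hc
        have hgs := hg₁ s
        rw [hsj] at hgs
        have hcj : c.1.1 ≠ j := fun h => hirr j (h ▸ hgs)
        by_cases hci : c.1.1 = i
        · exact aux c hci
        · rw [hτ₅ i c hci, hτ₅ j c hcj]
      · rw [hτ₆ j s hsj]
        have hsi : s.1 ≠ i := fun h => s.2 j (h ▸ hij : Θ s.1 j)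
        rw [hτ₆ i s hsi, hτ₆ j s hsj]
    · by_cases hsj : s.1 = j
      · rw [hτ₄ j s hsj]
        set c := g (Sum.inr s) with hc
        have hgs := hg₂ s
        rw [hsj] at hgs
        have hcj : c.1.1 ≠ j := fun h => hirr j (h ▸ hgs)
        by_cases hci : c.1.1 = i
        · exact aux c hci
        · rw [hτ₅ i c hci, hτ₅ j c hcj]
      · rw [hτ₇ j s hsj]
        have hsi : s.1 ≠ i := fun h => s.2.1 j (h ▸ hij : Θ s.1 j)
        rw [hτ₇ i s hsi, hτ₇ j s hsj]
    · simp only [hτ₈] <;> rfl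
  refine ⟨idem, comm, fun i j hij => ⟨?_, ?_⟩, ?_⟩
  · funext x
    show τ i (τ j (τ i x)) = τ j (τ i (τ j x))
    rw [hC1 i j hij x, hC2 i j hij x]
  · funext x
    exact hC2 i j hij x
  · -- the monoid homomorphism
    let f : FreeMonoid V →* Function.End (MSet Θ) :=
      FreeMonoid.lift (fun i => (τ i : Function.End (MSet Θ)))
    have hf : ∀ i, f (of i) = τ i := fun i => rfl
    have hker : conGen (HKRel Θ) ≤ Con.ker f := by
      apply Con.conGen_le.2
      intro x y h
      rw [Con.ker_rel]
      rcases h with ⟨i⟩ | ⟨i, j, h1, h2⟩ | ⟨i, j, h1, h2⟩ | ⟨i, j, h1, h2⟩ | ⟨i, j, h1, h2⟩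
      · show f (of i * of i) = f (of i)
        rw [map_mul, hf]
        exact idem i
      · show f (of i * of j) = f (of j * of i)
        rw [map_mul, map_mul, hf, hf]
        exact comm i j (fun h => ((hadj i j).1 h).elim h1 h2)
      · exact absurd h2 (hasym i j h1)
      · show f (of i * of j * of i) = f (of i * of j)
        rw [map_mul, map_mul, hf, hf]
        funext x
        exact hC1 i j h1 x
      · show f (of j * of i * of j) = f (of i * of j)
        rw [map_mul, map_mul, hf, hf]
        funext x
        exact hC2 i j h1 x
    refine ⟨(conGen (HKRel Θ)).lift f hker, fun i => ?_, fun ψ hψ => ?_⟩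
    · show (conGen (HKRel Θ)).lift f hker ((conGen (HKRel Θ)).mk' (of i)) = τ i
      rw [Con.lift_mk']
      exact hf i
    · have h1 : ψ.comp (conGen (HKRel Θ)).mk' =
          ((conGen (HKRel Θ)).lift f hker).comp (conGen (HKRel Θ)).mk' := by
        apply FreeMonoid.hom_eq
        intro a
        simp only [MonoidHom.comp_apply, Con.lift_mk']
        exact hψ a
      refine MonoidHom.ext fun x => ?_
      obtain ⟨w, rfl⟩ := Con.mk'_surjective x
      exact DFunLike.congr_fun h1 w
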